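/- Let k ≥ 1 and N_NA an even integer with 4k² + 4 ≤ N_NA ≤ 4k² + 4k + 2. Then the New Amsterdam digraph on Z_{N_NA} with steps β = −α = 1 and γ = −δ = 2k + 1 has diameter exactly 2k + 1. -/

import Mathlib

/-- A directed walk of length `l` from `u` to `v` in the digraph with arc relation `Adj`. -/
def DWalk {V : Type*} (Adj : V → V → Prop) (u v : V) (l : ℕ) : Prop :=
  ∃ f : ℕ → V, f 0 = u ∧ f l = v ∧ ∀ i < l, Adj (f i) (f (i + 1))

/-- The digraph with arc relation `Adj` has diameter exactly `D`. -/
def HasDiam {V : Type*} (Adj : V → V → Prop) (D : ℕ) : Prop :=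
  (∀ u v : V, ∃ l ≤ D, DWalk Adj u v l) ∧ ∃ u v : V, ∀ l, DWalk Adj u v l → D ≤ l

/-- The arc relation of the New Amsterdam digraph `NA(N; α, β, γ, δ)`. -/
def NAstep (N : ℕ) (α β γ δ : ℤ) (i j : ZMod N) : Prop :=
  (Even i.val ∧ (j = i + (α : ZMod N) ∨ j = i + (β : ZMod N))) ∨
  (¬ Even i.val ∧ (j = i + (γ : ZMod N) ∨ j = i + (δ : ZMod N)))

/-! ## Generic walk lemmas -/

lemma dwalk_refl {V : Type*} (Adj : V → V → Prop) (u : V) : DWalk Adj u u 0 :=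
  ⟨fun _ => u, rfl, rfl, fun i h => absurd h (by omega)⟩

lemma dwalk_cons {V : Type*} {Adj : V → V → Prop} {u x v : V} {l : ℕ}
    (h : Adj u x) (hw : DWalk Adj x v l) : DWalk Adj u v (l + 1) := by
  obtain ⟨f, h0, hl, hs⟩ := hw
  refine ⟨fun i => if i = 0 then u else f (i - 1), by simp, by simp [hl], ?_⟩
  intro i hi
  match i with
  | 0 => simpa [h0] using h
  | (j+1) => simpa using hs j (by omega)

lemma dwalk_snoc {V : Type*} {Adj : V → V → Prop} {u x v : V} {l : ℕ}
    (hw : DWalk Adj u x l) (h : Adj x v) : DWalk Adj u v (l + 1) := by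
  obtain ⟨f, h0, hl, hs⟩ := hw
  refine ⟨fun i => if i ≤ l then f i else v, by simp [h0], by simp, ?_⟩
  intro i hi
  rcases Nat.lt_or_ge i l with hlt | hge
  · simpa [Nat.le_of_lt hlt, Nat.succ_le_of_lt hlt] using hs i hlt
  · have : i = l := by omega
    subst this
    simp [hl, h, Nat.lt_irrefl]

lemma dwalk_tail {V : Type*} {Adj : V → V → Prop} {u v : V} {l : ℕ}
    (hw : DWalk Adj u v (l + 1)) : ∃ x, Adj u x ∧ DWalk Adj x v l := by
  obtain ⟨f, h0, hl, hs⟩ := hw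
  exact ⟨f 1, h0 ▸ hs 0 (by omega), fun i => f (i + 1), rfl, hl, fun i hi => hs (i + 1) (by omega)⟩

/-! ## Parity lemmas -/

lemma even_val_iff {N : ℕ} [NeZero N] (hN2 : 2 ∣ N) (x : ZMod N) :
    Even x.val ↔ ZMod.castHom hN2 (ZMod 2) x = 0 := by
  rw [ZMod.castHom_apply, ← ZMod.natCast_val, even_iff_two_dvd,
    ← ZMod.natCast_eq_zero_iff]

lemma even_val_add_int {N : ℕ} [NeZero N] (hN2 : 2 ∣ N) (x : ZMod N) (z : ℤ) :
    Even ((x + (z : ZMod N)).val) ↔ (Even x.val ↔ Even z) := by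
  rw [even_val_iff hN2, even_val_iff hN2, map_add, map_intCast]
  have hz : ((z : ZMod 2) = 0 ↔ Even z) := by
    rw [ZMod.intCast_zmod_eq_zero_iff_dvd, even_iff_two_dvd]
    norm_num
  rcases Int.even_or_odd z with hpar | hpar
  · rw [(hz.mpr hpar)]
    simp [hpar]
  · have hne : ¬ Even z := Int.not_even_iff_odd.mpr hpar
    have h1 : (z : ZMod 2) = 1 := by
      have h0 : (z : ZMod 2) ≠ 0 := fun h => hne (hz.mp h)
      revert h0; generalize (z : ZMod 2) = g; revert g; decide
    rw [h1]
    simp only [hne, iff_false]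
    generalize (ZMod.castHom hN2 (ZMod 2)) x = g
    revert g; decide

lemma even_val_sub {N : ℕ} [NeZero N] (hN2 : 2 ∣ N) (x y : ZMod N) :
    Even ((y - x).val) ↔ (Even y.val ↔ Even x.val) := by
  have he : y - x = y + ((-(x.val : ℤ) : ℤ) : ZMod N) := by
    push_cast [ZMod.natCast_val, ZMod.cast_id]; ring
  rw [he, even_val_add_int hN2, even_neg, Int.even_coe_nat]

/-! ## Arithmetic representation lemmas -/

lemma rep_exact (k : ℕ) (hk : 1 ≤ k) (m : ℤ) (hm : m.natAbs ≤ k * k + k) :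
    ∃ α β : ℤ, α.natAbs + β.natAbs ≤ k ∧ α * k + β * (k + 1) = m := by
  have hK1 : 1 ≤ (k : ℤ) := by exact_mod_cast hk
  have h' : |m| ≤ (k:ℤ) * k + k := by
    rw [Int.abs_eq_natAbs]; exact_mod_cast hm
  obtain ⟨hml, hmr⟩ := abs_le.mp h'
  set s : ℤ := (2 * m + k) / (2 * k + 1) with hs
  set e : ℤ := (2 * m + k) % (2 * k + 1) with he
  have hKpos : 0 < 2 * (k:ℤ) + 1 := by omega
  have hde : (2 * (k:ℤ) + 1) * s + e = 2 * m + k := Int.mul_ediv_add_emod _ _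
  have he0 : 0 ≤ e := Int.emod_nonneg _ (by omega)
  have he1 : e < 2 * (k:ℤ) + 1 := Int.emod_lt_of_pos _ hKpos
  have hsub : s ≤ (k:ℤ) := by nlinarith
  have hslb : -(k:ℤ) ≤ s := by nlinarith
  refine ⟨s - (m - s * k), m - s * k, ?_, by ring⟩
  have hdiff : (s - (m - s * k)) - (m - s * k) = (k:ℤ) - e := by linarith [hde]
  omega

lemma rep_mod (k N : ℕ) (hk : 1 ≤ k) (hNe : Even N)
    (h1 : 4 * k ^ 2 + 4 ≤ N) (h2 : N ≤ 4 * k ^ 2 + 4 * k + 2) (m : ℤ) :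
    ∃ α β : ℤ, α.natAbs + β.natAbs ≤ k ∧
      (N : ℤ) ∣ 2 * (α * k + β * (k + 1)) - 2 * m := by
  obtain ⟨n, hn⟩ := hNe
  have hn' : N = 2 * n := by omega
  have hnlb : 2 * (k * k) + 2 ≤ n := by nlinarith
  have hnub : n ≤ 2 * (k * k) + 2 * k + 1 := by nlinarith
  have hnz : (n:ℤ) ≠ 0 := by
    have : 0 < n := by nlinarith
    exact_mod_cast this.ne'
  have hnpos : (0:ℤ) < (n:ℤ)  := by exact_mod_cast (by nlinarith : 0 < n)
  set m₀ : ℤ := m % (n:ℤ) with hm₀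
  have h0l : 0 ≤ m₀ := Int.emod_nonneg _ hnz
  have h0u : m₀ < n := Int.emod_lt_of_pos _ hnpos
  have hdvd0 : (n:ℤ) ∣ m - m₀ := ⟨m / n, by rw [hm₀, Int.emod_def]; ring⟩
  set m₁ : ℤ := if m₀ ≤ (k:ℤ) * k + k then m₀ else m₀ - n with hm₁
  have hdvd1 : (n:ℤ) ∣ m - m₁ := by
    rw [hm₁]; split
    · exact hdvd0
    · obtain ⟨c, hc⟩ := hdvd0
      exact ⟨c + 1, by linarith⟩
  have hb : m₁.natAbs ≤ k * k + k := by
    have hcast : ((2 * (k * k) + 2 : ℕ) : ℤ) ≤ (n:ℤ) := by exact_mod_cast hnlb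
    have hcast2 : ((n:ℕ) : ℤ) ≤ ((2 * (k * k) + 2 * k + 1 : ℕ) : ℤ) := by exact_mod_cast hnub
    push_cast at hcast hcast2
    rw [hm₁]; split <;> omega
  obtain ⟨α, β, hco, heq⟩ := rep_exact k hk m₁ hb
  refine ⟨α, β, hco, ?_⟩
  obtain ⟨c, hc⟩ := hdvd1
  refine ⟨-c, ?_⟩
  have : ((N:ℕ) : ℤ) = 2 * (n:ℤ) := by exact_mod_cast hn'
  rw [this, heq]
  linarith [hc]

/-! ## Adjacency helpers -/

lemma adj_even {k N : ℕ} {u : ZMod N} (h : Even u.val) (e : ℤ) (he : e = 1 ∨ e = -1) :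
    NAstep N (-1) 1 (2*(k:ℤ)+1) (-(2*(k:ℤ)+1)) u (u + (e : ZMod N)) := by
  rcases he with h' | h' <;> subst h' <;> exact Or.inl ⟨h, by norm_num⟩

lemma adj_odd {k N : ℕ} {u : ZMod N} (h : ¬ Even u.val) (e : ℤ)
    (he : e = 2*(k:ℤ)+1 ∨ e = -(2*(k:ℤ)+1)) :
    NAstep N (-1) 1 (2*(k:ℤ)+1) (-(2*(k:ℤ)+1)) u (u + (e : ZMod N)) := by
  rcases he with h' | h' <;> subst h' <;> exact Or.inr ⟨h, by norm_num⟩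

/-! ## Walk constructions -/

lemma walk_even {k N : ℕ} [NeZero N] (hN2 : 2 ∣ N) :
    ∀ (n : ℕ) (α β : ℤ) (u : ZMod N), α.natAbs + β.natAbs = n → Even u.val →
    DWalk (NAstep N (-1) 1 (2*(k:ℤ)+1) (-(2*(k:ℤ)+1))) u
      (u + ((2*(α*(k:ℤ) + β*((k:ℤ)+1)) : ℤ) : ZMod N)) (2*n) := by
  intro n
  induction n with
  | zero =>
    intro α β u hab _
    have hα : α = 0 := by omega
    have hβ : β = 0 := by omega
    subst hα; subst hβ
    simpa using dwalk_refl _ u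
  | succ n ih =>
    intro α β u hab hu
    by_cases hα : α = 0
    · subst hα
      obtain ⟨ε, hε1, hβ'⟩ : ∃ ε : ℤ, (ε = 1 ∨ ε = -1) ∧
          (0:ℤ).natAbs + (β - ε).natAbs = n := by
        rcases le_or_gt 0 β with h | h
        · exact ⟨1, Or.inl rfl, by simp at hab ⊢; omega⟩
        · exact ⟨-1, Or.inr rfl, by simp at hab ⊢; omega⟩
      have hεodd : ¬ Even ε := by rcases hε1 with h | h <;> subst h <;> decide
      have hmid : ¬ Even ((u + (ε : ZMod N)).val) := by
        rw [even_val_add_int hN2]; simp [hu, hεodd]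
      have step1 := adj_even (k := k) hu ε hε1
      have step2 := adj_odd (k := k) hmid (ε*(2*(k:ℤ)+1))
        (by rcases hε1 with h | h <;> subst h <;> [left; right] <;> ring)
      set u' := u + (ε : ZMod N) + ((ε*(2*(k:ℤ)+1) : ℤ) : ZMod N) with hu'
      have hu'e : u' = u + ((ε + ε*(2*(k:ℤ)+1) : ℤ) : ZMod N) := by
        rw [hu']; push_cast; ring
      have hu'even : Even u'.val := by
        rw [hu'e, even_val_add_int hN2]
        have : Even (ε + ε*(2*(k:ℤ)+1)) := by
          rcases hε1 with h | h <;> subst h <;> simp [Int.even_iff] <;> omega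
        simp [hu, this]
      have ihw := ih 0 (β - ε) u' hβ' hu'even
      have hfin : u' + ((2*((0:ℤ)*(k:ℤ) + (β-ε)*((k:ℤ)+1)) : ℤ) : ZMod N)
          = u + ((2*((0:ℤ)*(k:ℤ) + β*((k:ℤ)+1)) : ℤ) : ZMod N) := by
        rw [hu'e]; push_cast; ring
      rw [hfin] at ihw
      have := dwalk_cons step1 (dwalk_cons step2 ihw)
      rwa [show 2*n + 1 + 1 = 2*(n+1) by ring] at this
    · obtain ⟨ε, hε1, hα'⟩ : ∃ ε : ℤ, (ε = 1 ∨ ε = -1) ∧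
          (α - ε).natAbs + β.natAbs = n := by
        rcases le_or_gt 0 α with h | h
        · exact ⟨1, Or.inl rfl, by omega⟩
        · exact ⟨-1, Or.inr rfl, by omega⟩
      have hεodd : ¬ Even (-ε) := by rcases hε1 with h | h <;> subst h <;> decide
      have hmid : ¬ Even ((u + ((-ε : ℤ) : ZMod N)).val) := by
        rw [even_val_add_int hN2]; simp [hu, hεodd]
      have step1 := adj_even (k := k) hu (-ε)
        (by rcases hε1 with h | h <;> subst h <;> [right; left] <;> ring)
      have step2 := adj_odd (k := k) hmid (ε*(2*(k:ℤ)+1))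
        (by rcases hε1 with h | h <;> subst h <;> [left; right] <;> ring)
      set u' := u + ((-ε : ℤ) : ZMod N) + ((ε*(2*(k:ℤ)+1) : ℤ) : ZMod N) with hu'
      have hu'e : u' = u + ((-ε + ε*(2*(k:ℤ)+1) : ℤ) : ZMod N) := by
        rw [hu']; push_cast; ring
      have hu'even : Even u'.val := by
        rw [hu'e, even_val_add_int hN2]
        have : Even (-ε + ε*(2*(k:ℤ)+1)) := by
          rcases hε1 with h | h <;> subst h <;> simp [Int.even_iff] <;> omega
        simp [hu, this]
      have ihw := ih (α - ε) β u' hα' hu'even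
      have hfin : u' + ((2*((α - ε)*(k:ℤ) + β*((k:ℤ)+1)) : ℤ) : ZMod N)
          = u + ((2*(α*(k:ℤ) + β*((k:ℤ)+1)) : ℤ) : ZMod N) := by
        rw [hu'e]; push_cast; ring
      rw [hfin] at ihw
      have := dwalk_cons step1 (dwalk_cons step2 ihw)
      rwa [show 2*n + 1 + 1 = 2*(n+1) by ring] at this

lemma walk_odd {k N : ℕ} [NeZero N] (hN2 : 2 ∣ N) :
    ∀ (n : ℕ) (α β : ℤ) (u : ZMod N), α.natAbs + β.natAbs = n → ¬ Even u.val →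
    DWalk (NAstep N (-1) 1 (2*(k:ℤ)+1) (-(2*(k:ℤ)+1))) u
      (u + ((2*(α*(k:ℤ) + β*((k:ℤ)+1)) : ℤ) : ZMod N)) (2*n) := by
  intro n
  induction n with
  | zero =>
    intro α β u hab _
    have hα : α = 0 := by omega
    have hβ : β = 0 := by omega
    subst hα; subst hβ
    simpa using dwalk_refl _ u
  | succ n ih =>
    intro α β u hab hu
    by_cases hα : α = 0
    · subst hα
      obtain ⟨ε, hε1, hβ'⟩ : ∃ ε : ℤ, (ε = 1 ∨ ε = -1) ∧
          (0:ℤ).natAbs + (β - ε).natAbs = n := by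
        rcases le_or_gt 0 β with h | h
        · exact ⟨1, Or.inl rfl, by simp at hab ⊢; omega⟩
        · exact ⟨-1, Or.inr rfl, by simp at hab ⊢; omega⟩
      have hbigodd : ¬ Even (ε*(2*(k:ℤ)+1)) := by
        rcases hε1 with h | h <;> subst h <;> simp [Int.even_iff] <;> omega
      have hmid : Even ((u + ((ε*(2*(k:ℤ)+1) : ℤ) : ZMod N)).val) := by
        rw [even_val_add_int hN2]; simp [hu, hbigodd]
      have step1 := adj_odd (k := k) hu (ε*(2*(k:ℤ)+1))
        (by rcases hε1 with h | h <;> subst h <;> [left; right] <;> ring)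
      have step2 := adj_even (k := k) hmid ε hε1
      set u' := u + ((ε*(2*(k:ℤ)+1) : ℤ) : ZMod N) + (ε : ZMod N) with hu'
      have hu'e : u' = u + ((ε*(2*(k:ℤ)+1) + ε : ℤ) : ZMod N) := by
        rw [hu']; push_cast; ring
      have hu'odd : ¬ Even u'.val := by
        rw [hu'e, even_val_add_int hN2]
        have : Even (ε*(2*(k:ℤ)+1) + ε) := by
          rcases hε1 with h | h <;> subst h <;> simp [Int.even_iff] <;> omega
        simp [hu, this]
      have ihw := ih 0 (β - ε) u' hβ' hu'odd
      have hfin : u' + ((2*((0:ℤ)*(k:ℤ) + (β-ε)*((k:ℤ)+1)) : ℤ) : ZMod N)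
          = u + ((2*((0:ℤ)*(k:ℤ) + β*((k:ℤ)+1)) : ℤ) : ZMod N) := by
        rw [hu'e]; push_cast; ring
      rw [hfin] at ihw
      have := dwalk_cons step1 (dwalk_cons step2 ihw)
      rwa [show 2*n + 1 + 1 = 2*(n+1) by ring] at this
    · obtain ⟨ε, hε1, hα'⟩ : ∃ ε : ℤ, (ε = 1 ∨ ε = -1) ∧
          (α - ε).natAbs + β.natAbs = n := by
        rcases le_or_gt 0 α with h | h
        · exact ⟨1, Or.inl rfl, by omega⟩
        · exact ⟨-1, Or.inr rfl, by omega⟩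
      have hbigodd : ¬ Even (ε*(2*(k:ℤ)+1)) := by
        rcases hε1 with h | h <;> subst h <;> simp [Int.even_iff] <;> omega
      have hmid : Even ((u + ((ε*(2*(k:ℤ)+1) : ℤ) : ZMod N)).val) := by
        rw [even_val_add_int hN2]; simp [hu, hbigodd]
      have step1 := adj_odd (k := k) hu (ε*(2*(k:ℤ)+1))
        (by rcases hε1 with h | h <;> subst h <;> [left; right] <;> ring)
      have step2 := adj_even (k := k) hmid (-ε)
        (by rcases hε1 with h | h <;> subst h <;> [right; left] <;> ring)
      set u' := u + ((ε*(2*(k:ℤ)+1) : ℤ) : ZMod N) + ((-ε : ℤ) : ZMod N) with hu'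
      have hu'e : u' = u + ((ε*(2*(k:ℤ)+1) - ε : ℤ) : ZMod N) := by
        rw [hu']; push_cast; ring
      have hu'odd : ¬ Even u'.val := by
        rw [hu'e, even_val_add_int hN2]
        have : Even (ε*(2*(k:ℤ)+1) - ε) := by
          rcases hε1 with h | h <;> subst h <;> simp [Int.even_iff] <;> omega
        simp [hu, this]
      have ihw := ih (α - ε) β u' hα' hu'odd
      have hfin : u' + ((2*((α - ε)*(k:ℤ) + β*((k:ℤ)+1)) : ℤ) : ZMod N)
          = u + ((2*(α*(k:ℤ) + β*((k:ℤ)+1)) : ℤ) : ZMod N) := by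
        rw [hu'e]; push_cast; ring
      rw [hfin] at ihw
      have := dwalk_cons step1 (dwalk_cons step2 ihw)
      rwa [show 2*n + 1 + 1 = 2*(n+1) by ring] at this

/-! ## Walk characterization -/

lemma walk_char {k N : ℕ} [NeZero N] (hN2 : 2 ∣ N) :
    ∀ (l : ℕ) (u v : ZMod N),
    DWalk (NAstep N (-1) 1 (2*(k:ℤ)+1) (-(2*(k:ℤ)+1))) u v l →
    ∃ a b : ℤ, v = u + ((a + b*(2*(k:ℤ)+1) : ℤ) : ZMod N) ∧
      (Even u.val → a.natAbs ≤ (l+1)/2 ∧ b.natAbs ≤ l/2) ∧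
      (¬ Even u.val → a.natAbs ≤ l/2 ∧ b.natAbs ≤ (l+1)/2) ∧
      (a + b) % 2 = (l : ℤ) % 2 := by
  intro l
  induction l with
  | zero =>
    intro u v hw
    obtain ⟨f, h0, hl, _⟩ := hw
    refine ⟨0, 0, by simp [← h0, ← hl], by simp, by simp, by simp⟩
  | succ l ih =>
    intro u v hw
    obtain ⟨x, hadj, hw'⟩ := dwalk_tail hw
    rcases hadj with ⟨hu, hx⟩ | ⟨hu, hx⟩
    · obtain ⟨e, he, hxe⟩ : ∃ e : ℤ, (e = 1 ∨ e = -1) ∧ x = u + (e : ZMod N) := by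
        rcases hx with h | h
        · exact ⟨-1, Or.inr rfl, h⟩
        · exact ⟨1, Or.inl rfl, h⟩
      have hxodd : ¬ Even x.val := by
        rw [hxe, even_val_add_int hN2]
        have : ¬ Even e := by rcases he with h | h <;> subst h <;> decide
        simp [hu, this]
      obtain ⟨a', b', hv, _, hbound, hpar⟩ := ih x v hw'
      refine ⟨e + a', b', ?_, fun _ => ?_, fun h => absurd hu h, ?_⟩
      · rw [hv, hxe]; push_cast; ring
      · obtain ⟨ha', hb'⟩ := hbound hxodd
        constructor <;> rcases he with h | h <;> subst h <;> omega
      · rcases he with h | h <;> subst h <;> push_cast <;> omega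
    · obtain ⟨e, he, hxe⟩ : ∃ e : ℤ, (e = 1 ∨ e = -1) ∧
          x = u + ((e * (2*(k:ℤ)+1) : ℤ) : ZMod N) := by
        rcases hx with h | h
        · exact ⟨1, Or.inl rfl, by rw [h]; norm_num⟩
        · exact ⟨-1, Or.inr rfl, by rw [h]; push_cast; ring⟩
      have hxeven : Even x.val := by
        rw [hxe, even_val_add_int hN2]
        have : ¬ Even (e * (2*(k:ℤ)+1)) := by
          rcases he with h | h <;> subst h <;> simp [Int.even_iff] <;> omega
        simp [hu, this]
      obtain ⟨a', b', hv, hbound, _, hpar⟩ := ih x v hw'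
      refine ⟨a', e + b', ?_, fun h => absurd h hu, fun _ => ?_, ?_⟩
      · rw [hv, hxe]; push_cast; ring
      · obtain ⟨ha', hb'⟩ := hbound hxeven
        constructor <;> rcases he with h | h <;> subst h <;> omega
      · rcases he with h | h <;> subst h <;> push_cast <;> omega

/-! ## Reachability within the bound -/

lemma reach2 (k N : ℕ) [NeZero N] (hk : 1 ≤ k) (hNe : Even N)
    (h1 : 4 * k ^ 2 + 4 ≤ N) (h2 : N ≤ 4 * k ^ 2 + 4 * k + 2)
    (hN2 : 2 ∣ N) (x y : ZMod N) (hpar : Even ((y - x).val)) :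
    ∃ l ≤ 2 * k, DWalk (NAstep N (-1) 1 (2*(k:ℤ)+1) (-(2*(k:ℤ)+1))) x y l := by
  set d := y - x with hd
  obtain ⟨m, hm⟩ := hpar
  obtain ⟨α, β, hco, hdvd⟩ := rep_mod k N hk hNe h1 h2 (m : ℤ)
  have hcast : ((2*(α*(k:ℤ) + β*((k:ℤ)+1)) : ℤ) : ZMod N) = d := by
    have h2m : ((2*(m:ℤ) : ℤ) : ZMod N) = d := by
      have : ((d.val : ℕ) : ZMod N) = d := ZMod.natCast_rightInverse d
      rw [← this]
      have : (d.val : ℤ) = 2 * (m:ℤ) := by exact_mod_cast (by omega : d.val = 2 * m)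
      push_cast
      exact_mod_cast congrArg (Int.cast : ℤ → ZMod N) this.symm
    rw [← h2m]
    have := (ZMod.intCast_eq_intCast_iff (2*(α*(k:ℤ) + β*((k:ℤ)+1))) (2*(m:ℤ)) N).mpr
      (Int.ModEq.symm (Int.modEq_iff_dvd.mpr (by
        have : (2*(α*(k:ℤ) + β*((k:ℤ)+1))) - 2*(m:ℤ) = 2 * (α * k + β * (k + 1)) - 2 * m := by
          push_cast; ring
        rw [this]; exact hdvd)))
    exact_mod_cast this
  by_cases hx : Even x.val
  · refine ⟨2 * (α.natAbs + β.natAbs), by omega, ?_⟩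
    have := walk_even (k := k) hN2 (α.natAbs + β.natAbs) α β x rfl hx
    rwa [hcast, hd, add_sub_cancel] at this
  · refine ⟨2 * (α.natAbs + β.natAbs), by omega, ?_⟩
    have := walk_odd (k := k) hN2 (α.natAbs + β.natAbs) α β x rfl hx
    rwa [hcast, hd, add_sub_cancel] at this

theorem stmt_14 (k N : ℕ) (hk : 1 ≤ k) (hNe : Even N)
    (h1 : 4 * k ^ 2 + 4 ≤ N) (h2 : N ≤ 4 * k ^ 2 + 4 * k + 2) :
    HasDiam (NAstep N (-1) 1 (2 * (k : ℤ) + 1) (-(2 * (k : ℤ) + 1))) (2 * k + 1) := by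
  have hk2 : 1 ≤ k ^ 2 := Nat.one_le_pow _ _ (by omega)
  haveI : NeZero N := ⟨by omega⟩
  have hN2 : 2 ∣ N := hNe.two_dvd
  constructor
  · -- upper bound
    intro u v
    by_cases hu : Even u.val <;> by_cases hv : Even v.val
    · -- even → even
      have hpar : Even ((v - u).val) :=
        (even_val_sub hN2 u v).mpr (iff_of_true hv hu)
      obtain ⟨l, hl, hwalk⟩ := reach2 k N hk hNe h1 h2 hN2 u v hpar
      exact ⟨l, by omega, hwalk⟩
    · -- even → odd : go to v - 1, then one step
      have hv1 : v - 1 = v + ((-1 : ℤ) : ZMod N) := by push_cast; ring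
      have hm1 : ¬ Even (-1 : ℤ) := by decide
      have hveven : Even ((v - 1).val) := by
        rw [hv1, even_val_add_int hN2]
        simp [hv, hm1]
      have hpar : Even ((v - 1 - u).val) :=
        (even_val_sub hN2 u (v - 1)).mpr (iff_of_true hveven hu)
      obtain ⟨l, hl, hwalk⟩ := reach2 k N hk hNe h1 h2 hN2 u (v - 1) hpar
      have hstep : NAstep N (-1) 1 (2*(k:ℤ)+1) (-(2*(k:ℤ)+1)) (v - 1) v := by
        have := adj_even (k := k) (N := N) hveven 1 (Or.inl rfl)
        simpa using this
      exact ⟨l + 1, by omega, dwalk_snoc hwalk hstep⟩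
    · -- odd → even : one step, then even walk
      set x := u + ((2*(k:ℤ)+1 : ℤ) : ZMod N) with hx
      have hxeven : Even x.val := by
        rw [hx, even_val_add_int hN2]
        have : ¬ Even (2*(k:ℤ)+1) := by simp [Int.even_iff]
        simp [hu, this]
      have hpar : Even ((v - x).val) :=
        (even_val_sub hN2 x v).mpr (iff_of_true hv hxeven)
      obtain ⟨l, hl, hwalk⟩ := reach2 k N hk hNe h1 h2 hN2 x v hpar
      have hstep : NAstep N (-1) 1 (2*(k:ℤ)+1) (-(2*(k:ℤ)+1)) u x :=
        adj_odd (k := k) hu _ (Or.inl rfl)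
      exact ⟨l + 1, by omega, dwalk_cons hstep hwalk⟩
    · -- odd → odd
      have hpar : Even ((v - u).val) :=
        (even_val_sub hN2 u v).mpr (iff_of_false hv hu)
      obtain ⟨l, hl, hwalk⟩ := reach2 k N hk hNe h1 h2 hN2 u v hpar
      exact ⟨l, by omega, hwalk⟩
  · -- lower bound
    refine ⟨0, ((2 * k^2 + 1 : ℕ) : ZMod N), ?_⟩
    intro l hw
    by_contra hcon
    push_neg at hcon
    have hl2k : l ≤ 2 * k := by omega
    have h0even : Even ((0 : ZMod N).val) := by simp [ZMod.val_zero]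
    obtain ⟨a, b, hv, hbound, _, hpar⟩ := walk_char (k := k) hN2 l 0 _ hw
    obtain ⟨ha, hb⟩ := hbound h0even
    have hvlt : 2 * k^2 + 1 < N := by omega
    have hvval : (((2 * k^2 + 1 : ℕ) : ZMod N)).val = 2 * k^2 + 1 :=
      ZMod.val_natCast_of_lt hvlt
    rw [zero_add] at hv
    rcases Nat.even_or_odd l with hle | hlo
    · -- even length: target would be even, contradiction
      have : Even ((((a + b*(2*(k:ℤ)+1)) : ℤ) : ZMod N).val) := by
        rw [show (((a + b*(2*(k:ℤ)+1)) : ℤ) : ZMod N)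
            = 0 + (((a + b*(2*(k:ℤ)+1)) : ℤ) : ZMod N) by rw [zero_add]]
        rw [even_val_add_int hN2]
        have hab : Even (a + b) := by
          rw [Int.even_iff]
          have : (l : ℤ) % 2 = 0 := by
            obtain ⟨t, ht⟩ := hle; omega
          omega
        have : Even (a + b*(2*(k:ℤ)+1)) := by
          obtain ⟨t, ht⟩ := hab
          exact ⟨t + b*k, by linarith⟩
        simp [h0even, this]
      rw [← hv, hvval] at this
      rw [Nat.even_iff] at this
      omega
    · -- odd length ≤ 2k-1 : integer too small
      have hlodd : l % 2 = 1 := Nat.odd_iff.mp hlo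
      have hl' : l ≤ 2 * k - 1 := by omega
      have hak : a.natAbs ≤ k := by omega
      have hbk : b.natAbs ≤ k - 1 := by omega
      have haI : |a| ≤ (k : ℤ) := by
        rw [Int.abs_eq_natAbs]; exact_mod_cast hak
      have hbI : |b| ≤ (k : ℤ) - 1 := by
        rw [Int.abs_eq_natAbs]
        have : (b.natAbs : ℤ) ≤ ((k - 1 : ℕ) : ℤ) := by exact_mod_cast hbk
        have hk' : ((k - 1 : ℕ) : ℤ) = (k : ℤ) - 1 := by
          have : 1 ≤ k := hk; push_cast [this]; ring
        omega
      obtain ⟨hal, har⟩ := abs_le.mp haI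
      obtain ⟨hbl, hbr⟩ := abs_le.mp hbI
      set z : ℤ := a + b*(2*(k:ℤ)+1) with hz
      have hzcast : ((z : ℤ) : ZMod N) = ((2 * k^2 + 1 : ℕ) : ZMod N) := hv.symm
      have hzcast' : ((z : ℤ) : ZMod N) = ((2 * (k:ℤ)^2 + 1 : ℤ) : ZMod N) := by
        rw [hzcast]; push_cast; ring_nf
      have hdvd : (N : ℤ) ∣ (2 * (k:ℤ)^2 + 1) - z :=
        ((ZMod.intCast_eq_intCast_iff _ _ _).mp hzcast').dvd
      have hzub : z ≤ 2 * (k:ℤ)^2 - 1 := by nlinarith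
      have hzlb : -(2 * (k:ℤ)^2 - 1) ≤ z := by nlinarith
      have hNle : (N : ℤ) ≤ (2 * (k:ℤ)^2 + 1) - z := by
        refine Int.le_of_dvd ?_ hdvd
        omega
      have hNlb : (4 * (k:ℤ)^2 + 4) ≤ (N : ℤ) := by exact_mod_cast h1
      nlinarith
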